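/- arXiv:1603.05647 — 3 statements merged into one kernel-verified Lean document; each statement's English description precedes it below -/
import Mathlib

section
/- A ring R is left virtually semisimple if and only if R is a semiprime principal left ideal ring. -/
universe u v w

/-- A left `R`-module `M` is *virtually semisimple* if every submodule of `M` is
isomorphic, as an `R`-module, to a direct summand of `M`. -/
def IsVirtuallySemisimple (R : Type u) [Ring R] (M : Type v) [AddCommGroup M] [Module R M] :
    Prop :=
  ∀ N : Submodule R M, ∃ K : Submodule R M, (∃ K' : Submodule R M, IsCompl K K') ∧
    Nonempty (N ≃ₗ[R] K)

/-- A module is *completely virtually semisimple* if every submodule is virtually semisimple. -/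
def IsCompletelyVirtuallySemisimple (R : Type u) [Ring R] (M : Type v) [AddCommGroup M]
    [Module R M] : Prop :=
  ∀ N : Submodule R M, IsVirtuallySemisimple R N


/-- A ring is *semiprime* if it has no nonzero two-sided ideal with square zero. -/
def IsSemiprimeRing (S : Type w) [Ring S] : Prop :=
  ∀ I : TwoSidedIdeal S, (∀ x ∈ I, ∀ y ∈ I, x * y = 0) → I = ⊥

namespace VSSProof
variable {R : Type*} [Ring R]
open Submodule

set_option linter.unusedVariables false
set_option linter.unnecessarySimpa false
section

variable {R : Type*} [Ring R]

open Submodule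

/-- left annihilator of an element, as a left ideal -/
def lann (x : R) : Submodule R R := LinearMap.ker (LinearMap.toSpanSingleton R R x)

lemma mem_lann {x r : R} : r ∈ lann x ↔ r * x = 0 := by
  simp [lann, LinearMap.mem_ker, LinearMap.toSpanSingleton_apply, smul_eq_mul]

lemma mem_span_elt {x y : R} : y ∈ span R ({x} : Set R) ↔ ∃ c, y = c * x := by
  rw [mem_span_singleton]
  constructor
  · rintro ⟨c, rfl⟩; exact ⟨c, by rw [smul_eq_mul]⟩
  · rintro ⟨c, rfl⟩; exact ⟨c, by rw [smul_eq_mul]⟩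

/-- essential left ideal -/
def Ess (N : Submodule R R) : Prop := ∀ L : Submodule R R, L ≠ ⊥ → N ⊓ L ≠ ⊥

lemma Ess.mono {N N' : Submodule R R} (h : Ess N) (hle : N ≤ N') : Ess N' := by
  intro L hL
  intro hbot
  exact h L hL (le_bot_iff.mp (le_trans (inf_le_inf_right L hle) hbot.le))

lemma Ess.exists_ne_zero {N L : Submodule R R} (h : Ess N) (hL : L ≠ ⊥) :
    ∃ x, x ∈ N ∧ x ∈ L ∧ x ≠ 0 := by
  obtain ⟨x, hx, hx0⟩ := (Submodule.ne_bot_iff _).mp (h L hL)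
  exact ⟨x, hx.1, hx.2, hx0⟩

/-- essentiality of colon ideals -/
lemma ess_comap {E : Submodule R R} (hE : Ess E) (r : R) :
    Ess (comap (LinearMap.toSpanSingleton R R r) E) := by
  intro L hL
  by_cases hml : map (LinearMap.toSpanSingleton R R r) L = ⊥
  · -- L ≤ comap
    have hle : L ≤ comap (LinearMap.toSpanSingleton R R r) E := by
      intro x hx
      have : LinearMap.toSpanSingleton R R r x ∈ map (LinearMap.toSpanSingleton R R r) L :=
        mem_map_of_mem hx
      rw [hml, mem_bot] at this
      simp only [mem_comap, this]
      exact zero_mem E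
    rw [inf_eq_right.mpr hle]
    exact hL
  · obtain ⟨y, hyE, hyM, hy0⟩ := hE.exists_ne_zero hml
    obtain ⟨x, hxL, hxy⟩ := hyM
    refine (Submodule.ne_bot_iff _).mpr ⟨x, ⟨?_, hxL⟩, ?_⟩
    · show x ∈ comap (LinearMap.toSpanSingleton R R r) E
      rw [mem_comap, hxy]; exact hyE
    · rintro rfl; exact hy0 (by rw [← hxy]; simp)

lemma lann_le_lann_of_right {x : R} (u : R) :
    comap (LinearMap.toSpanSingleton R R u) (lann x) ≤ lann (u * x) := by
  intro s hs
  simp only [mem_comap, LinearMap.toSpanSingleton_apply, smul_eq_mul, mem_lann] at hs ⊢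
  rw [← mul_assoc, hs]


/-- elementwise characterization of semiprimeness -/
lemma semiprime_iff :
    IsSemiprimeRing R ↔ ∀ z : R, (∀ r : R, z * r * z = 0) → z = 0 := by
  constructor
  · intro hsp z hz
    set T : Submodule R R := span R (Set.range (fun s => z * s)) with hT
    have hTright : ∀ x ∈ T, ∀ s : R, x * s ∈ T := by
      intro x hx s
      induction hx using Submodule.span_induction with
      | mem y hy =>
          obtain ⟨t, rfl⟩ := hy
          rw [mul_assoc]
          exact subset_span ⟨t * s, rfl⟩
      | zero => simpa using zero_mem T
      | add a b _ _ ha hb => rw [add_mul]; exact add_mem ha hb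
      | smul r a _ ha =>
          rw [smul_eq_mul, mul_assoc]
          exact smul_mem T r ha
    have hmulz : ∀ x ∈ T, x * z = 0 := by
      intro x hx
      induction hx using Submodule.span_induction with
      | mem y hy =>
          obtain ⟨t, rfl⟩ := hy
          show z * t * z = 0
          exact hz t
      | zero => simp
      | add a b _ _ ha hb => rw [add_mul, ha, hb, add_zero]
      | smul r a _ ha => rw [smul_eq_mul, mul_assoc, ha, mul_zero]
    have key : ∀ y ∈ T, ∀ x ∈ T, x * y = 0 := by
      intro y hy
      induction hy using Submodule.span_induction with
      | mem c hc =>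
          obtain ⟨t, rfl⟩ := hc
          intro x hx
          rw [← mul_assoc, hmulz x hx, zero_mul]
      | zero => intro x _; simp
      | add a b _ _ ha hb => intro x hx; rw [mul_add, ha x hx, hb x hx, add_zero]
      | smul r a _ ha =>
          intro x hx
          rw [smul_eq_mul, ← mul_assoc]
          exact ha (x * r) (hTright x hx r)
    -- build a two-sided ideal with carrier T
    set I : TwoSidedIdeal R := TwoSidedIdeal.mk' (T : Set R)
      (zero_mem T) (fun ha hb => add_mem ha hb) (fun ha => neg_mem ha)
      (fun {x y} hy => by simpa [smul_eq_mul] using smul_mem T x hy)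
      (fun {x y} hx => hTright x hx y) with hI
    have hIT : ∀ x : R, x ∈ I ↔ x ∈ T := fun x => TwoSidedIdeal.mem_mk' _ _ _ _ _ _ x
    have hIbot : I = ⊥ := hsp I (by
      intro x hx y hy
      exact key y ((hIT y).mp hy) x ((hIT x).mp hx))
    have hzT : z ∈ I := (hIT z).mpr (subset_span ⟨1, by simp⟩)
    rw [hIbot] at hzT
    simpa using hzT
  · intro helt I hI
    refine SetLike.ext fun x => ?_
    constructor
    · intro hx
      have : x = 0 := by
        apply helt
        intro r
        rw [mul_assoc]
        exact hI x hx (r * x) (I.mul_mem_left r x hx)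
      rw [this]
      exact TwoSidedIdeal.zero_mem ⊥
    · intro hx
      have : x = 0 := by
        have := hx
        rwa [TwoSidedIdeal.mem_bot] at this
      rw [this]
      exact TwoSidedIdeal.zero_mem I


section Noeth
variable (hN : IsNoetherian R R)
include hN

/-- maximal complements exist and give essential sups -/
lemma exists_ess_compl (N : Submodule R R) :
    ∃ C : Submodule R R, N ⊓ C = ⊥ ∧ Ess (N ⊔ C) := by
  have hmax := set_has_maximal_iff_noetherian.mpr hN
  obtain ⟨C, hC, hCmax⟩ := hmax {C : Submodule R R | N ⊓ C = ⊥} ⟨⊥, by simp⟩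
  refine ⟨C, hC, ?_⟩
  intro L hL hbot
  -- L ⊓ (N ⊔ C) = ⊥ ; show C ⊔ L is a bigger complement
  have hdisj : N ⊓ (C ⊔ L) = ⊥ := by
    rw [Submodule.eq_bot_iff]
    rintro x ⟨hxN, hxCL⟩
    rw [SetLike.mem_coe, Submodule.mem_sup] at hxCL
    rw [SetLike.mem_coe] at hxN
    obtain ⟨c, hc, l, hl, rfl⟩ := hxCL
    have hlW : l ∈ (N ⊔ C) ⊓ L := by
      constructor
      · have : (c + l) - c ∈ N ⊔ C := by
          exact sub_mem (le_sup_left (a := N) (b := C) hxN) (le_sup_right (a := N) hc)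
        simpa using this
      · exact hl
    rw [hbot, mem_bot] at hlW
    subst hlW
    have hcm : c ∈ N ⊓ C := ⟨by simpa using hxN, hc⟩
    have : c ∈ (⊥ : Submodule R R) := hC ▸ hcm
    rw [mem_bot] at this
    simp [this]
  have hlt : C < C ⊔ L := by
    refine lt_of_le_of_ne le_sup_left ?_
    intro heq
    have hLC : L ≤ C := heq ▸ le_sup_right
    have : L ≤ (N ⊔ C) ⊓ L := le_inf (le_trans hLC le_sup_right) le_rfl
    rw [hbot] at this
    exact hL (le_bot_iff.mp this)
  exact hCmax _ hdisj hlt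

/-- ascending chains of left annihilators of powers stabilize -/
lemma fitting {v : R} (hv : Ess (span R ({v} : Set R)))
    (hsq : ∀ u : R, Ess (span R ({u} : Set R)) → Ess (span R ({u * u} : Set R))) :
    lann v = ⊥ := by
  -- chain of annihilators of v^(2^k)
  have hmono : ∀ a b : ℕ, a ≤ b → lann (v ^ a) ≤ lann (v ^ b) := by
    intro a b hab r hr
    rw [mem_lann] at hr ⊢
    obtain ⟨c, rfl⟩ := Nat.exists_eq_add_of_le hab
    rw [pow_add, ← mul_assoc, hr, zero_mul]
  obtain ⟨n, hn⟩ := (monotone_stabilizes_iff_noetherian.mpr hN)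
    ⟨fun k => lann (v ^ (2 ^ k)), fun a b hab => hmono _ _ (Nat.pow_le_pow_right (by norm_num) hab)⟩
  -- essentiality of span of powers of v
  have hesspow : ∀ k : ℕ, Ess (span R ({v ^ (2 ^ k)} : Set R)) := by
    intro k
    induction k with
    | zero => simpa using hv
    | succ k ih =>
        have := hsq _ ih
        have hEq : v ^ (2 ^ k) * v ^ (2 ^ k) = v ^ (2 ^ (k + 1)) := by
          rw [← pow_add]; ring_nf
        rwa [hEq] at this
  set w := v ^ (2 ^ n) with hw
  have hstab : lann w = lann (w * w) := by
    have h1 : lann (w * w) = lann (v ^ (2 ^ (n + 1))) := by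
      rw [hw, ← pow_add]; ring_nf
    have := hn (n + 1) (Nat.le_succ n)
    change lann (v ^ (2 ^ n)) = lann (v ^ (2 ^ (n + 1))) at this
    rw [h1, ← this]
  -- lann w ⊓ span w = ⊥
  have hint : lann w ⊓ span R ({w} : Set R) = ⊥ := by
    rw [Submodule.eq_bot_iff]
    rintro x ⟨hx1, hx2⟩
    rw [SetLike.mem_coe, mem_lann] at hx1
    rw [SetLike.mem_coe] at hx2
    obtain ⟨c, rfl⟩ := mem_span_elt.mp hx2
    rw [mul_assoc] at hx1
    have : c ∈ lann (w * w) := mem_lann.mpr hx1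
    rw [← hstab, mem_lann] at this
    rw [this]
  have hwzero : lann w = ⊥ := by
    by_contra hne
    have := hesspow n
    rw [← hw] at this
    exact this (lann w) hne (by rwa [inf_comm] at hint)
  rw [Submodule.eq_bot_iff]
  intro r hr
  rw [mem_lann] at hr
  have : r ∈ lann w := by
    rw [mem_lann, hw]
    have h1 : (2 : ℕ) ^ n = 1 + (2 ^ n - 1) := by
      have : 1 ≤ 2 ^ n := Nat.one_le_two_pow
      omega
    rw [h1, pow_add, pow_one, ← mul_assoc, hr, zero_mul]
  rw [hwzero, mem_bot] at this
  exact this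

end Noeth


section Backward

/-- In a semiprime ring with ACC, no nonzero element has essential left annihilator. -/
lemma no_singular (hN : IsNoetherian R R)
    (helt : ∀ z : R, (∀ r : R, z * r * z = 0) → z = 0)
    {a : R} (ha : a ≠ 0) : ¬ Ess (lann a) := by
  intro hEss
  have hmax := set_has_maximal_iff_noetherian.mpr hN
  obtain ⟨S, hS, hSmax⟩ := hmax {S : Submodule R R | ∃ y : R, y ≠ 0 ∧ Ess (lann y) ∧ S = lann y}
    ⟨lann a, a, ha, hEss, rfl⟩
  obtain ⟨y, hy0, hyEss, rfl⟩ := hS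
  obtain ⟨r, hr⟩ : ∃ r : R, y * r * y ≠ 0 := by
    by_contra h
    push_neg at h
    exact hy0 (helt y h)
  set t := y * r * y with ht
  have hle : lann y ≤ lann t := by
    intro s hs
    rw [mem_lann] at hs ⊢
    rw [ht, ← mul_assoc, ← mul_assoc, hs, zero_mul, zero_mul]
  have htEss : Ess (lann t) := hyEss.mono hle
  have heq : lann t = lann y := by
    by_contra hne
    exact hSmax (lann t) ⟨t, hr, htEss, rfl⟩ (lt_of_le_of_ne hle (Ne.symm hne))
  have hyr : y * r ≠ 0 := fun h => hr (by rw [ht, h, zero_mul])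
  obtain ⟨q, hqann, hqspan, hq0⟩ := hyEss.exists_ne_zero
    (L := span R ({y * r} : Set R)) (by
      rw [Submodule.ne_bot_iff]
      exact ⟨y * r, mem_span_elt.mpr ⟨1, (one_mul _).symm⟩, hyr⟩)
  obtain ⟨s, rfl⟩ := mem_span_elt.mp hqspan
  rw [mem_lann] at hqann
  have hst : s * t = 0 := by
    rw [ht]
    calc s * (y * r * y) = s * (y * r) * y := by rw [← mul_assoc, ← mul_assoc]
    _ = 0 := hqann
  have hsy : s * y = 0 := by
    have : s ∈ lann y := heq ▸ mem_lann.mpr hst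
    rwa [mem_lann] at this
  exact hq0 (by rw [← mul_assoc, hsy, zero_mul])

/-- With no nonzero singular elements, essential cyclic ideals square essentially. -/
lemma ess_sq (hZ : ∀ b : R, b ≠ 0 → ¬ Ess (lann b))
    (v : R) (hv : Ess (span R ({v} : Set R))) : Ess (span R ({v * v} : Set R)) := by
  intro L hL
  obtain ⟨a, haspan, haL, ha0⟩ := hv.exists_ne_zero hL
  obtain ⟨r, rfl⟩ := mem_span_elt.mp haspan
  set E := span R ({v} : Set R) ⊔ lann v with hE
  have hEss : Ess E := hv.mono le_sup_left
  set P := comap (LinearMap.toSpanSingleton R R r) E with hP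
  have hPess : Ess P := ess_comap hEss r
  have hnle : ¬ P ≤ lann (r * v) := by
    intro hle
    exact hZ (r * v) ha0 (hPess.mono hle)
  obtain ⟨u, huP, hu⟩ := SetLike.not_le_iff_exists.mp hnle
  have huv : u * (r * v) ≠ 0 := by
    intro h
    exact hu (mem_lann.mpr h)
  have hurE : u * r ∈ E := by
    have := huP
    rw [hP, mem_comap, LinearMap.toSpanSingleton_apply, smul_eq_mul] at this
    exact this
  rw [hE, Submodule.mem_sup] at hurE
  obtain ⟨c, hc, s, hs, hcs⟩ := hurE
  obtain ⟨c', rfl⟩ := mem_span_elt.mp hc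
  rw [mem_lann] at hs
  have hmem : u * (r * v) ∈ span R ({v * v} : Set R) := by
    have heq2 : u * (r * v) = c' * (v * v) := by
      calc u * (r * v) = (u * r) * v := by rw [mul_assoc]
      _ = (c' * v + s) * v := by rw [hcs]
      _ = c' * v * v + s * v := by rw [add_mul]
      _ = c' * (v * v) := by rw [hs, add_zero, mul_assoc]
    rw [heq2]
    exact mem_span_elt.mpr ⟨c', rfl⟩
  have hmemL : u * (r * v) ∈ L := by
    have := smul_mem L u haL
    rwa [smul_eq_mul] at this
  rw [Submodule.ne_bot_iff]
  exact ⟨u * (r * v), ⟨hmem, hmemL⟩, huv⟩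

end Backward

lemma noetherian_of_pir (hpir : IsPrincipalIdealRing R) : IsNoetherian R R := by
  rw [isNoetherian_def]
  intro s
  haveI := hpir.principal s
  obtain ⟨a, ha⟩ := Submodule.IsPrincipal.principal s
  exact ⟨{a}, by rw [Finset.coe_singleton]; exact ha.symm⟩

/-- The backward direction: a semiprime principal left ideal ring is left virtually
semisimple. -/
lemma vss_of_semiprime_pir
    (helt : ∀ z : R, (∀ r : R, z * r * z = 0) → z = 0)
    (hpir : IsPrincipalIdealRing R) (N : Submodule R R) :
    ∃ K : Submodule R R, (∃ K' : Submodule R R, IsCompl K K') ∧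
      Nonempty (N ≃ₗ[R] K) := by
  have hN : IsNoetherian R R := noetherian_of_pir hpir
  obtain ⟨C, hNC, hEssW⟩ := exists_ess_compl hN N
  set W := N ⊔ C with hW
  haveI := hpir.principal W
  obtain ⟨w, hw⟩ := Submodule.IsPrincipal.principal W
  have hEssw : Ess (span R ({w} : Set R)) := by rwa [← hw]
  have hlw : lann w = ⊥ :=
    fitting hN hEssw (fun u hu => ess_sq (fun b hb => no_singular hN helt hb) u hu)
  -- the two pulled-back pieces
  set K := comap (LinearMap.toSpanSingleton R R w) N with hK
  set K' := comap (LinearMap.toSpanSingleton R R w) C with hK'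
  have hmemK : ∀ r : R, r ∈ K ↔ r * w ∈ N := by
    intro r
    rw [hK, mem_comap, LinearMap.toSpanSingleton_apply, smul_eq_mul]
  have hmemK' : ∀ r : R, r ∈ K' ↔ r * w ∈ C := by
    intro r
    rw [hK', mem_comap, LinearMap.toSpanSingleton_apply, smul_eq_mul]
  have hinj : ∀ r : R, r * w = 0 → r = 0 := by
    intro r hr
    have : r ∈ lann w := mem_lann.mpr hr
    rwa [hlw, mem_bot] at this
  refine ⟨K, ⟨K', ?_, ?_⟩, ?_⟩
  · -- disjointness
    rw [disjoint_iff]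
    rw [Submodule.eq_bot_iff]
    rintro x ⟨hx1, hx2⟩
    rw [SetLike.mem_coe] at hx1 hx2
    have : x * w ∈ N ⊓ C := ⟨(hmemK x).mp hx1, (hmemK' x).mp hx2⟩
    rw [hNC, mem_bot] at this
    exact hinj x this
  · -- codisjointness
    rw [codisjoint_iff]
    rw [eq_top_iff]
    intro r _
    have hrw : r * w ∈ W := by
      rw [hw]
      exact mem_span_elt.mpr ⟨r, rfl⟩
    rw [hW, Submodule.mem_sup] at hrw
    obtain ⟨n, hn, c, hc, hnc⟩ := hrw
    -- n and c are multiples of w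
    have hnW : n ∈ W := le_sup_left (a := N) (b := C) hn
    have hcW : c ∈ W := le_sup_right (a := N) (b := C) hc
    rw [hw] at hnW hcW
    obtain ⟨p, rfl⟩ := mem_span_elt.mp hnW
    obtain ⟨q, rfl⟩ := mem_span_elt.mp hcW
    have hr : r = p + q := by
      have h0 : (r - p - q) * w = 0 := by
        rw [sub_mul, sub_mul, ← hnc]
        abel
      have h2 : r - p - q = 0 := hinj _ h0
      rw [sub_sub] at h2
      exact sub_eq_zero.mp h2
    rw [hr]
    exact Submodule.add_mem_sup ((hmemK p).mpr hn) ((hmemK' q).mpr hc)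
  · -- the isomorphism N ≃ K
    refine ⟨LinearEquiv.symm (LinearEquiv.ofBijective ?_ ?_)⟩
    · exact {
        toFun := fun k => ⟨(k : R) * w, (hmemK (k : R)).mp k.2⟩
        map_add' := by
          intro k1 k2
          apply Subtype.ext
          simp [add_mul]
        map_smul' := by
          intro r k
          apply Subtype.ext
          simp [smul_eq_mul, mul_assoc] }
    · constructor
      · intro k1 k2 hk
        apply Subtype.ext
        have : (k1 : R) * w = (k2 : R) * w := congrArg Subtype.val hk
        have h2 : ((k1 : R) - k2) * w = 0 := by rw [sub_mul, this, sub_self]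
        exact sub_eq_zero.mp (hinj _ h2)
      · rintro ⟨y, hy⟩
        have hyW : y ∈ W := le_sup_left (a := N) (b := C) hy
        rw [hw] at hyW
        obtain ⟨p, rfl⟩ := mem_span_elt.mp hyW
        exact ⟨⟨p, (hmemK p).mpr hy⟩, rfl⟩

section Forward

/-- From a complemented left ideal, get an idempotent right unit for it. -/
lemma compl_idem {K K' : Submodule R R} (h : IsCompl K K') :
    ∃ e : R, e ∈ K ∧ (∀ m ∈ K, m = m * e) ∧ e * e = e := by
  have h1 : (1 : R) ∈ K ⊔ K' := by
    rw [h.sup_eq_top]; trivial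
  rw [Submodule.mem_sup] at h1
  obtain ⟨e, he, e', he', hee⟩ := h1
  have key : ∀ m ∈ K, m = m * e := by
    intro m hm
    have hdecomp : m * e + m * e' = m := by
      calc m * e + m * e' = m * (e + e') := by rw [mul_add]
      _ = m := by rw [hee, mul_one]
    have h2 : m - m * e ∈ K := by
      refine sub_mem hm ?_
      have := smul_mem K m he
      rwa [smul_eq_mul] at this
    have h3 : m - m * e ∈ K' := by
      have hme' : m * e' ∈ K' := by
        have := smul_mem K' m he'
        rwa [smul_eq_mul] at this
      have : m - m * e = m * e' := by
        rw [sub_eq_iff_eq_add, add_comm]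
        exact hdecomp.symm
      rwa [this]
    have : m - m * e ∈ K ⊓ K' := ⟨h2, h3⟩
    rw [h.inf_eq_bot, mem_bot] at this
    have := sub_eq_zero.mp this
    exact this
  exact ⟨e, he, key, (key e he).symm⟩

/-- Canonical alignment: any left ideal isomorphic to a complemented one has a generator `d`
whose left annihilator matches that of the idempotent. -/
lemma alignment (hVSS : ∀ N : Submodule R R, ∃ K : Submodule R R,
      (∃ K' : Submodule R R, IsCompl K K') ∧ Nonempty (N ≃ₗ[R] K))
    (N : Submodule R R) :
    ∃ (K : Submodule R R) (e d : R),
      e ∈ K ∧ (∀ m ∈ K, m = m * e) ∧ e * e = e ∧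
      d ∈ N ∧ (∀ r : R, r * d = 0 ↔ r * e = 0) ∧
      (∀ y ∈ N, ∃ c ∈ K, y = c * d) ∧ e * d = d := by
  obtain ⟨K, ⟨K', hcompl⟩, ⟨θ⟩⟩ := hVSS N
  obtain ⟨e, heK, hKe, hee⟩ := compl_idem hcompl
  set dd : N := θ.symm ⟨e, heK⟩ with hdd
  refine ⟨K, e, (dd : R), heK, hKe, hee, dd.2, ?_, ?_, ?_⟩
  · intro r
    have h1 : r * (dd : R) = ((r • dd : N) : R) := by
      rw [Submodule.coe_smul, smul_eq_mul]
    have h2 : (r • dd : N) = θ.symm (r • ⟨e, heK⟩) := by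
      rw [hdd, map_smul]
    constructor
    · intro h
      have hz : (r • dd : N) = 0 := by
        apply Subtype.ext
        rw [← h1]; exact h
      rw [h2] at hz
      have hz2 : (r • (⟨e, heK⟩ : K)) = 0 := (LinearEquiv.map_eq_zero_iff θ.symm).mp hz
      have hco := congrArg Subtype.val hz2
      simpa [smul_eq_mul] using hco
    · intro h
      have hz : (r • (⟨e, heK⟩ : K)) = 0 := by
        apply Subtype.ext
        simpa [smul_eq_mul] using h
      have h3 : (r • dd : N) = 0 := by
        rw [h2, hz, map_zero]
      have h4 := congrArg Subtype.val h3
      rw [h1]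
      simpa using h4
  · intro y hy
    set c : R := ((θ ⟨y, hy⟩ : K) : R) with hc
    refine ⟨c, (θ ⟨y, hy⟩).2, ?_⟩
    have hce : c * e = c := (hKe c (θ ⟨y, hy⟩).2).symm
    have h4 : c • dd = θ.symm (c • ⟨e, heK⟩) := by rw [hdd, map_smul]
    have h5 : (c • (⟨e, heK⟩ : K)) = θ ⟨y, hy⟩ := by
      apply Subtype.ext
      rw [Submodule.coe_smul, smul_eq_mul, hce]
    have h6 : c • dd = ⟨y, hy⟩ := by
      rw [h4, h5, LinearEquiv.symm_apply_apply]
    have := congrArg Subtype.val h6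
    rw [Submodule.coe_smul, smul_eq_mul] at this
    exact this.symm
  · -- e * d = d
    have h4 : e • dd = θ.symm (e • ⟨e, heK⟩) := by rw [hdd, map_smul]
    have h5 : (e • (⟨e, heK⟩ : K)) = (⟨e, heK⟩ : K) := by
      apply Subtype.ext
      rw [Submodule.coe_smul, smul_eq_mul, hee]
    have h6 : e • dd = dd := by rw [h4, h5, ← hdd]
    have := congrArg Subtype.val h6
    rwa [Submodule.coe_smul, smul_eq_mul] at this

/-- Virtually semisimple rings are principal left ideal rings. -/
lemma pir_of_vss (hVSS : ∀ N : Submodule R R, ∃ K : Submodule R R,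
      (∃ K' : Submodule R R, IsCompl K K') ∧ Nonempty (N ≃ₗ[R] K)) :
    IsPrincipalIdealRing R := by
  constructor
  intro S
  obtain ⟨K, e, d, _, _, _, hdN, _, hgen, _⟩ := alignment hVSS S
  refine ⟨⟨d, ?_⟩⟩
  apply le_antisymm
  · intro y hy
    obtain ⟨c, _, rfl⟩ := hgen y hy
    exact mem_span_elt.mpr ⟨c, rfl⟩
  · rw [span_le, Set.singleton_subset_iff]
    exact hdN

end Forward

section Udim

/-- relative essential submodule -/
def EssIn (A B : Submodule R R) : Prop :=
  A ≤ B ∧ ∀ L : Submodule R R, L ≤ B → L ≠ ⊥ → A ⊓ L ≠ ⊥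

/-- uniform left ideal -/
def Unif (U : Submodule R R) : Prop :=
  U ≠ ⊥ ∧ ∀ X Y : Submodule R R, X ≤ U → Y ≤ U → X ≠ ⊥ → Y ≠ ⊥ → X ⊓ Y ≠ ⊥

/-- independent family -/
def Indep {n : ℕ} (V : Fin n → Submodule R R) : Prop :=
  ∀ j, V j ⊓ (Finset.univ.erase j).sup V = ⊥

lemma EssIn.exists_ne_zero' {A B S : Submodule R R} (h : EssIn A B) (hS : S ≤ B)
    (hS0 : S ≠ ⊥) : ∃ x, x ∈ A ∧ x ∈ S ∧ x ≠ 0 := by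
  obtain ⟨x, hx, hx0⟩ := (Submodule.ne_bot_iff _).mp (h.2 S hS hS0)
  exact ⟨x, hx.1, hx.2, hx0⟩

lemma essIn_trans {A B C : Submodule R R} (h1 : EssIn A B) (h2 : EssIn B C) : EssIn A C := by
  refine ⟨le_trans h1.1 h2.1, fun L hLC hL => ?_⟩
  have hBL : B ⊓ L ≠ ⊥ := h2.2 L hLC hL
  have := h1.2 (B ⊓ L) inf_le_left hBL
  intro hbot
  apply this
  rw [eq_bot_iff] at hbot ⊢
  intro x hx
  exact hbot ⟨hx.1, hx.2.2⟩

lemma essIn_of_ess {N : Submodule R R} (h : Ess N) : EssIn N ⊤ :=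
  ⟨le_top, fun L _ hL => h L hL⟩

lemma span_ne_bot_of {x : R} (hx : x ≠ 0) : span R ({x} : Set R) ≠ ⊥ := by
  rw [Submodule.ne_bot_iff]
  exact ⟨x, mem_span_elt.mpr ⟨1, (one_mul x).symm⟩, hx⟩

lemma span_le_of_mem {x : R} {A : Submodule R R} (hx : x ∈ A) :
    span R ({x} : Set R) ≤ A := by
  rw [span_le, Set.singleton_subset_iff]; exact hx

/-- binary essentiality of sups -/
lemma essIn_sup2 {A U B V : Submodule R R} (hA : EssIn A U) (hB : EssIn B V)
    (hUV : U ⊓ V = ⊥) : EssIn (A ⊔ B) (U ⊔ V) := by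
  refine ⟨sup_le_sup hA.1 hB.1, fun L hL hL0 => ?_⟩
  obtain ⟨x, hxL, hx0⟩ := (Submodule.ne_bot_iff L).mp hL0
  have hxUV : x ∈ U ⊔ V := hL hxL
  rw [Submodule.mem_sup] at hxUV
  obtain ⟨u, hu, v, hv, hx⟩ := hxUV
  rw [Submodule.ne_bot_iff]
  by_cases hu0 : u = 0
  · -- x = v ∈ V
    have hxV : x ∈ V := by rw [← hx, hu0, zero_add]; exact hv
    obtain ⟨b, hbB, hbs, hb0⟩ := hB.exists_ne_zero' (span_le_of_mem hxV) (span_ne_bot_of hx0)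
    obtain ⟨s, rfl⟩ := mem_span_elt.mp hbs
    refine ⟨s * x, ⟨Submodule.mem_sup_right hbB, ?_⟩, hb0⟩
    have := smul_mem L s hxL
    rwa [smul_eq_mul] at this
  · obtain ⟨a1, ha1A, ha1s, ha10⟩ := hA.exists_ne_zero' (span_le_of_mem hu) (span_ne_bot_of hu0)
    obtain ⟨r, rfl⟩ := mem_span_elt.mp ha1s
    have hrx : r * x = r * u + r * v := by rw [← hx, mul_add]
    have hrxL : r * x ∈ L := by
      have := smul_mem L r hxL
      rwa [smul_eq_mul] at this
    by_cases hrv0 : r * v = 0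
    · refine ⟨r * x, ⟨Submodule.mem_sup_left (by rwa [hrx, hrv0, add_zero]), hrxL⟩, ?_⟩
      rw [hrx, hrv0, add_zero]
      exact ha10
    · have hrvV : r * v ∈ V := by
        have := smul_mem V r hv
        rwa [smul_eq_mul] at this
      obtain ⟨b1, hb1B, hb1s, hb10⟩ :=
        hB.exists_ne_zero' (span_le_of_mem hrvV) (span_ne_bot_of hrv0)
      obtain ⟨s, rfl⟩ := mem_span_elt.mp hb1s
      refine ⟨s * (r * x), ⟨?_, ?_⟩, ?_⟩
      · have heq : s * (r * x) = s * (r * u) + s * (r * v) := by rw [hrx, mul_add]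
        rw [heq]
        refine add_mem (Submodule.mem_sup_left ?_) (Submodule.mem_sup_right hb1B)
        have := smul_mem A s ha1A
        rwa [smul_eq_mul] at this
      · have := smul_mem L s hrxL
        rwa [smul_eq_mul] at this
      · intro hzero
        have heq : s * (r * x) = s * (r * u) + s * (r * v) := by rw [hrx, mul_add]
        rw [heq] at hzero
        have hmem : s * (r * v) ∈ U ⊓ V := by
          constructor
          · have hneg : s * (r * v) = -(s * (r * u)) := by
              rw [eq_neg_iff_add_eq_zero, add_comm]
              exact hzero
            rw [hneg]
            refine neg_mem ?_
            refine hA.1 ?_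
            have := smul_mem A s ha1A
            rwa [smul_eq_mul] at this
          · exact hB.1 hb1B
        rw [hUV, mem_bot] at hmem
        exact hb10 hmem

/-- adding a disjoint member to an independent family -/
lemma indep_cons {n : ℕ} {V : Fin n → Submodule R R} {B Y : Submodule R R}
    (hV : Indep V) (hVle : ∀ i, V i ≤ B) (hYB : Y ⊓ B = ⊥) :
    Indep (Fin.cons Y V : Fin (n + 1) → Submodule R R) := by
  intro j
  rcases Fin.eq_zero_or_eq_succ j with hj | ⟨i, hj⟩
  · subst hj
    rw [Fin.cons_zero]
    have hle : (Finset.univ.erase (0 : Fin (n + 1))).sup (Fin.cons Y V) ≤ B := by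
      refine Finset.sup_le fun k hk => ?_
      have hk0 : k ≠ 0 := (Finset.mem_erase.mp hk).1
      obtain ⟨i, rfl⟩ : ∃ i : Fin n, k = i.succ := ⟨k.pred hk0, by simp⟩
      rw [Fin.cons_succ]
      exact hVle i
    rw [eq_bot_iff]
    exact le_trans (inf_le_inf_left Y hle) (le_of_eq hYB)
  · subst hj
    rw [Fin.cons_succ]
    have hle : (Finset.univ.erase (i.succ : Fin (n + 1))).sup (Fin.cons Y V) ≤
        Y ⊔ (Finset.univ.erase i).sup V := by
      refine Finset.sup_le fun k hk => ?_
      rcases Fin.eq_zero_or_eq_succ k with hk0 | ⟨i', hk'⟩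
      · subst hk0
        rw [Fin.cons_zero]
        exact le_sup_left
      · subst hk'
        rw [Fin.cons_succ]
        have hii : i' ≠ i := by
          intro h
          subst h
          exact (Finset.mem_erase.mp hk).1 rfl
        exact le_trans (Finset.le_sup (Finset.mem_erase.mpr ⟨hii, Finset.mem_univ _⟩))
          le_sup_right
    rw [eq_bot_iff]
    refine le_trans (inf_le_inf_left _ hle) ?_
    -- V i ⊓ (Y ⊔ rest) = ⊥
    intro x hx
    obtain ⟨hxV, hxYR⟩ := hx
    rw [SetLike.mem_coe, Submodule.mem_sup] at hxYR
    obtain ⟨y, hy, rest, hrest, hyr⟩ := hxYR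
    have hyB : y ∈ Y ⊓ B := by
      refine ⟨hy, ?_⟩
      have : y = x - rest := by rw [← hyr]; abel
      rw [this]
      refine sub_mem (hVle i hxV) ?_
      exact (Finset.sup_le fun k hk => hVle k) hrest
    rw [hYB, mem_bot] at hyB
    have hxrest : x = rest := by rw [← hyr, hyB, zero_add]
    have : x ∈ V i ⊓ (Finset.univ.erase i).sup V := ⟨hxV, by rwa [hxrest]⟩
    rw [hV i, mem_bot] at this
    exact this

end Udim

section Udim2

lemma essIn_finset {ι : Type*} [DecidableEq ι] (s : Finset ι) (U W : ι → Submodule R R)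
    (h1 : ∀ i ∈ s, EssIn (W i) (U i))
    (h2 : ∀ i ∈ s, U i ⊓ (s.erase i).sup U = ⊥) :
    EssIn (s.sup W) (s.sup U) := by
  induction s using Finset.induction_on with
  | empty =>
      refine ⟨le_rfl, fun L hL hL0 => ?_⟩
      rw [Finset.sup_empty] at hL
      exact absurd (le_bot_iff.mp hL) hL0
  | insert a s ha IH =>
      rw [Finset.sup_insert, Finset.sup_insert]
      refine essIn_sup2 (h1 a (Finset.mem_insert_self a s)) ?_ ?_
      · refine IH (fun i hi => h1 i (Finset.mem_insert_of_mem hi)) (fun i hi => ?_)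
        have hsub : s.erase i ⊆ (insert a s).erase i :=
          Finset.erase_subset_erase i (Finset.subset_insert a s)
        rw [eq_bot_iff]
        refine le_trans (inf_le_inf_left _ (Finset.sup_mono hsub)) ?_
        exact le_of_eq (h2 i (Finset.mem_insert_of_mem hi))
      · have := h2 a (Finset.mem_insert_self a s)
        rwa [Finset.erase_insert ha] at this

lemma exists_uniform (hN : IsNoetherian R R) (A : Submodule R R) (hA : A ≠ ⊥) :
    ∃ U, U ≤ A ∧ Unif U := by
  by_contra hcon
  push_neg at hcon
  have hsplit : ∀ N : Submodule R R, N ≤ A → N ≠ ⊥ →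
      ∃ p : Submodule R R × Submodule R R,
        p.1 ≤ N ∧ p.2 ≤ N ∧ p.1 ≠ ⊥ ∧ p.2 ≠ ⊥ ∧ p.1 ⊓ p.2 = ⊥ := by
    intro N hNA hN0
    have hnu := hcon N hNA
    rw [Unif] at hnu
    push_neg at hnu
    obtain ⟨X, Y, hX, hY, hX0, hY0, hXY⟩ := hnu hN0
    exact ⟨(X, Y), hX, hY, hX0, hY0, hXY⟩
  classical
  let T := {p : Submodule R R × Submodule R R // p.2 ≤ A ∧ p.2 ≠ ⊥}
  let step : T → T := fun q =>
    let spec := hsplit q.1.2 q.2.1 q.2.2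
    ⟨((Classical.choose spec).1, (Classical.choose spec).2),
      le_trans (Classical.choose_spec spec).2.1 q.2.1,
      (Classical.choose_spec spec).2.2.2.1⟩
  let seq : ℕ → T := fun n => Nat.rec ⟨(⊥, A), le_rfl, hA⟩ (fun _ q => step q) n
  have hseq : ∀ n, seq (n + 1) = step (seq n) := fun n => rfl
  -- properties of the step
  have hstep : ∀ q : T, ((step q).1.1 ≤ q.1.2 ∧ (step q).1.2 ≤ q.1.2 ∧
      (step q).1.1 ≠ ⊥ ∧ (step q).1.1 ⊓ (step q).1.2 = ⊥) := by
    intro q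
    have spec := Classical.choose_spec (hsplit q.1.2 q.2.1 q.2.2)
    exact ⟨spec.1, spec.2.1, spec.2.2.1, spec.2.2.2.2⟩
  set Xf : ℕ → Submodule R R := fun n => (seq (n + 1)).1.1 with hXf
  set Nf : ℕ → Submodule R R := fun n => (seq n).1.2 with hNf
  have hX_le : ∀ n, Xf n ≤ Nf n := fun n => (hstep (seq n)).1
  have hN_le : ∀ n, Nf (n + 1) ≤ Nf n := fun n => (hstep (seq n)).2.1
  have hX_ne : ∀ n, Xf n ≠ ⊥ := fun n => (hstep (seq n)).2.2.1
  have hXN : ∀ n, Xf n ⊓ Nf (n + 1) = ⊥ := fun n => (hstep (seq n)).2.2.2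
  set Sf : ℕ → Submodule R R := fun n => (Finset.range n).sup Xf with hSf
  have hSmono : Monotone Sf := by
    intro a b hab
    exact Finset.sup_mono (Finset.range_subset_range.mpr hab)
  have hSsucc : ∀ n, Sf (n + 1) = Xf n ⊔ Sf n := by
    intro n
    rw [hSf]
    simp only []
    rw [Finset.range_add_one, Finset.sup_insert]
  have hinv : ∀ n, Sf n ⊓ Nf n = ⊥ := by
    intro n
    induction n with
    | zero =>
        rw [hSf]
        simp only []
        rw [Finset.range_zero, Finset.sup_empty, bot_inf_eq]
    | succ n IH =>
        rw [hSsucc n, Submodule.eq_bot_iff]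
        rintro x ⟨hx1, hx2⟩
        rw [SetLike.mem_coe, Submodule.mem_sup] at hx1
        obtain ⟨ξ, hξ, sS, hsS, hxs⟩ := hx1
        rw [SetLike.mem_coe] at hx2
        have hs0 : sS = 0 := by
          have hmem : sS ∈ Sf n ⊓ Nf n := by
            refine ⟨hsS, ?_⟩
            have : sS = x - ξ := by rw [← hxs]; abel
            rw [this]
            exact sub_mem (hN_le n hx2) (hX_le n hξ)
          rw [IH, mem_bot] at hmem
          exact hmem
        have hxX : x ∈ Xf n ⊓ Nf (n + 1) := by
          refine ⟨?_, hx2⟩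
          rw [← hxs, hs0, add_zero]
          exact hξ
        rw [hXN n, mem_bot] at hxX
        exact hxX
  have hstrict : ∀ n, Sf n ≠ Sf (n + 1) := by
    intro n heq
    have hXle : Xf n ≤ Sf n := by
      rw [heq, hSsucc n]
      exact le_sup_left
    have : Xf n ≤ Sf n ⊓ Nf n := le_inf hXle (hX_le n)
    rw [hinv n] at this
    exact hX_ne n (le_bot_iff.mp this)
  obtain ⟨n0, hn0⟩ := (monotone_stabilizes_iff_noetherian.mpr hN) ⟨Sf, hSmono⟩
  exact hstrict n0 (hn0 (n0 + 1) (Nat.le_succ n0))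

lemma sup_univ_cons {n : ℕ} (Y : Submodule R R) (V : Fin n → Submodule R R) :
    Finset.univ.sup (Fin.cons Y V : Fin (n + 1) → Submodule R R) = Y ⊔ Finset.univ.sup V := by
  rw [Fin.univ_succ, Finset.sup_cons, Finset.sup_map]
  congr 1

lemma exists_unif_family (hN : IsNoetherian R R) :
    ∃ (m : ℕ) (U : Fin m → Submodule R R),
      (∀ i, Unif (U i)) ∧ Indep U ∧ EssIn (Finset.univ.sup U) ⊤ := by
  have hmax := set_has_maximal_iff_noetherian.mpr hN
  obtain ⟨Tm, hTm, hTmax⟩ := hmax {T : Submodule R R | ∃ (m : ℕ) (U : Fin m → Submodule R R),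
      (∀ i, Unif (U i)) ∧ Indep U ∧ T = Finset.univ.sup U}
    ⟨⊥, 0, Fin.elim0, fun i => i.elim0, fun i => i.elim0, by simp⟩
  obtain ⟨m, U, hU, hUI, rfl⟩ := hTm
  refine ⟨m, U, hU, hUI, le_top, fun L _ hL0 => ?_⟩
  intro hbot
  obtain ⟨U', hU'le, hU'⟩ := exists_uniform hN L hL0
  have hdisj : U' ⊓ Finset.univ.sup U = ⊥ := by
    rw [eq_bot_iff]
    refine le_trans (inf_le_inf_right _ hU'le) ?_
    rw [inf_comm] at hbot
    exact hbot.le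
  have hcons : Indep (Fin.cons U' U : Fin (m + 1) → Submodule R R) := by
    refine indep_cons hUI (fun i => Finset.le_sup (Finset.mem_univ i)) hdisj
  have hmem : U' ⊔ Finset.univ.sup U ∈ {T : Submodule R R | ∃ (m : ℕ)
      (U : Fin m → Submodule R R), (∀ i, Unif (U i)) ∧ Indep U ∧ T = Finset.univ.sup U} := by
    refine ⟨m + 1, Fin.cons U' U, ?_, hcons, (sup_univ_cons U' U).symm⟩
    intro i
    rcases Fin.eq_zero_or_eq_succ i with h | ⟨i', h⟩
    · subst h; rw [Fin.cons_zero]; exact hU'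
    · subst h; rw [Fin.cons_succ]; exact hU i'
  refine hTmax _ hmem ?_
  refine lt_of_le_of_ne le_sup_right ?_
  intro heq
  have : U' ≤ Finset.univ.sup U := by rw [heq]; exact le_sup_left
  have : U' ≤ U' ⊓ Finset.univ.sup U := le_inf le_rfl this
  rw [hdisj] at this
  exact hU'.1 (le_bot_iff.mp this)

end Udim2

section Bound

/-- helper: adding a member disjoint from an ambient `X` -/
lemma inf_sup_bot_aux {P Y O X : Submodule R R} (hY : Y ⊓ X = ⊥) (hP : P ≤ X) (hO : O ≤ X)
    (hPO : P ⊓ O = ⊥) : P ⊓ (Y ⊔ O) = ⊥ := by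
  rw [Submodule.eq_bot_iff]
  rintro x ⟨hxP, hxYO⟩
  rw [SetLike.mem_coe] at hxP
  rw [SetLike.mem_coe, Submodule.mem_sup] at hxYO
  obtain ⟨y, hy, o, ho, hyo⟩ := hxYO
  have hy0 : y = 0 := by
    have : y ∈ Y ⊓ X := by
      refine ⟨hy, ?_⟩
      have : y = x - o := by rw [← hyo]; abel
      rw [this]
      exact sub_mem (hP hxP) (hO ho)
    rw [hY, mem_bot] at this
    exact this
  have : x ∈ P ⊓ O := ⟨hxP, by rw [← hyo, hy0, zero_add]; exact ho⟩
  rw [hPO, mem_bot] at this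
  exact this

def Indep2 {m k : ℕ} (U : Fin m → Submodule R R) (s : Finset (Fin m))
    (V : Fin k → Submodule R R) : Prop :=
  (∀ i ∈ s, U i ⊓ ((s.erase i).sup U ⊔ Finset.univ.sup V) = ⊥) ∧
  (∀ j, V j ⊓ (s.sup U ⊔ (Finset.univ.erase j).sup V) = ⊥)

lemma indep2_bound {m : ℕ} (U : Fin m → Submodule R R) (hU : ∀ i, Unif (U i))
    (hUI : Indep U) (hT : EssIn (Finset.univ.sup U) ⊤) :
    ∀ (k : ℕ) (s : Finset (Fin m)) (V : Fin k → Submodule R R),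
      (∀ j, V j ≠ ⊥) → Indep2 U s V → k + s.card ≤ m := by
  intro k
  induction k with
  | zero =>
      intro s V hV h2
      have := Finset.card_le_univ s
      simpa using this
  | succ k IH =>
      intro s V hV h2
      set X := s.sup U ⊔ (Finset.univ.erase (0 : Fin (k + 1))).sup V with hX
      have hV0X : V 0 ⊓ X = ⊥ := h2.2 0
      have hstep : ∃ i₀, i₀ ∉ s ∧ U i₀ ⊓ X = ⊥ := by
        by_contra hno
        push_neg at hno
        have hall : ∀ i, U i ⊓ X ≠ ⊥ := by
          intro i
          by_cases his : i ∈ s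
          · have hle : U i ≤ X := le_trans (Finset.le_sup his) le_sup_left
            rw [inf_eq_left.mpr hle]
            exact (hU i).1
          · exact hno i his
        have hess1 : EssIn (Finset.univ.sup (fun i => U i ⊓ X)) (Finset.univ.sup U) := by
          refine essIn_finset Finset.univ U (fun i => U i ⊓ X) (fun i _ => ?_) (fun i _ => hUI i)
          refine ⟨inf_le_left, fun L hLU hL0 => ?_⟩
          rw [inf_comm]
          exact (hU i).2 L (U i ⊓ X) hLU inf_le_left hL0 (hall i)
        have hessT : EssIn (Finset.univ.sup (fun i => U i ⊓ X)) ⊤ := essIn_trans hess1 hT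
        have hne := hessT.2 (V 0) le_top (hV 0)
        apply hne
        rw [eq_bot_iff]
        refine le_trans (inf_le_inf_right _ (Finset.sup_le fun i _ => inf_le_right)) ?_
        rw [inf_comm]
        exact hV0X.le
      obtain ⟨i₀, hi₀s, hi₀⟩ := hstep
      set V' : Fin k → Submodule R R := fun j => V j.succ with hV'
      have hV'le : ∀ (t : Finset (Fin k)), t.sup V' ≤ (Finset.univ.erase (0 : Fin (k+1))).sup V := by
        intro t
        refine Finset.sup_le fun j _ => ?_
        exact Finset.le_sup (Finset.mem_erase.mpr ⟨Fin.succ_ne_zero j, Finset.mem_univ _⟩)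
      have h2' : Indep2 U (insert i₀ s) V' := by
        constructor
        · intro i hi
          rcases Finset.mem_insert.mp hi with rfl | his
          · rw [Finset.erase_insert hi₀s]
            rw [eq_bot_iff]
            refine le_trans (inf_le_inf_left _ ?_) hi₀.le
            refine sup_le ?_ ?_
            · exact le_trans (Finset.sup_le fun j hj => Finset.le_sup hj) le_sup_left
            · exact le_trans (hV'le _) le_sup_right
          · have hne : i₀ ≠ i := fun h => hi₀s (h ▸ his)
            rw [Finset.erase_insert_of_ne hne, Finset.sup_insert, sup_assoc]
            refine inf_sup_bot_aux hi₀ (le_trans (Finset.le_sup his) le_sup_left) ?_ ?_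
            · refine sup_le ?_ ?_
              · exact le_trans (Finset.sup_mono (Finset.erase_subset i s)) le_sup_left
              · exact le_trans (hV'le _) le_sup_right
            · rw [eq_bot_iff]
              refine le_trans (inf_le_inf_left _ ?_) (h2.1 i his).le
              refine sup_le le_sup_left ?_
              refine le_trans ?_ le_sup_right
              exact Finset.sup_le fun j _ =>
                (Finset.le_sup (Finset.mem_univ j.succ) : V j.succ ≤ Finset.univ.sup V)
        · intro j
          rw [Finset.sup_insert, sup_assoc]
          refine inf_sup_bot_aux hi₀ ?_ ?_ ?_
          · exact le_trans (Finset.le_sup (Finset.mem_erase.mpr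
              ⟨Fin.succ_ne_zero j, Finset.mem_univ _⟩) :
                V j.succ ≤ (Finset.univ.erase (0 : Fin (k+1))).sup V) le_sup_right
          · refine sup_le le_sup_left (le_trans (hV'le _) le_sup_right)
          · rw [eq_bot_iff]
            refine le_trans (inf_le_inf_left _ ?_) (h2.2 j.succ).le
            refine sup_le le_sup_left ?_
            refine le_trans ?_ le_sup_right
            refine Finset.sup_le fun j' hj' => ?_
            have hjj : j' ≠ j := (Finset.mem_erase.mp hj').1
            exact Finset.le_sup (Finset.mem_erase.mpr
              ⟨fun h => hjj (Fin.succ_injective k h), Finset.mem_univ _⟩)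
      have := IH (insert i₀ s) V' (fun j => hV j.succ) h2'
      rw [Finset.card_insert_of_notMem hi₀s] at this
      omega

/-- In a left noetherian ring, independent families of nonzero left ideals have
bounded size. -/
lemma indep_bound (hN : IsNoetherian R R) :
    ∃ m : ℕ, ∀ (k : ℕ) (V : Fin k → Submodule R R), (∀ j, V j ≠ ⊥) → Indep V → k ≤ m := by
  obtain ⟨m, U, hU, hUI, hT⟩ := exists_unif_family hN
  refine ⟨m, fun k V hV hVI => ?_⟩
  have h2 : Indep2 U ∅ V := by
    constructor
    · intro i hi
      exact absurd hi (Finset.notMem_empty i)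
    · intro j
      rw [Finset.sup_empty, bot_sup_eq]
      exact hVI j
  have := indep2_bound U hU hUI hT k ∅ V hV h2
  simpa using this

end Bound

section Recursion

def HasIndep (A : Submodule R R) (n : ℕ) : Prop :=
  ∃ V : Fin n → Submodule R R, (∀ i, V i ≠ ⊥) ∧ (∀ i, V i ≤ A) ∧ Indep V

lemma map_finset_sup_le {ι : Type*} (t : Finset ι) (f g : ι → Submodule R R)
    (ρ : R →ₗ[R] R) (h : ∀ i ∈ t, map ρ (f i) ≤ g i) : map ρ (t.sup f) ≤ t.sup g := by
  classical
  induction t using Finset.induction_on with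
  | empty => simp
  | insert a t ha IH =>
      rw [Finset.sup_insert, Finset.sup_insert, Submodule.map_sup]
      exact sup_le (le_trans (h a (Finset.mem_insert_self a t)) le_sup_left)
        (le_trans (IH fun i hi => h i (Finset.mem_insert_of_mem hi)) le_sup_right)

lemma recursion_step
    (hVSS : ∀ N : Submodule R R, ∃ K : Submodule R R,
      (∃ K' : Submodule R R, IsCompl K K') ∧ Nonempty (N ≃ₗ[R] K))
    {z : R} (hz0 : z ≠ 0) (hzRz : ∀ r, z * r * z = 0)
    {K : Submodule R R} {g : R} (hgK : g ∈ K) (hKg : ∀ m ∈ K, m = m * g)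
    (hkill : ∀ r, z * r * g = 0) {n : ℕ} (hind : HasIndep K n) :
    ∃ (K' : Submodule R R) (g' : R), g' ∈ K' ∧ (∀ m ∈ K', m = m * g') ∧
      (∀ r, z * r * g' = 0) ∧ HasIndep K' (n + 1) := by
  have hzg : z * g = 0 := by
    have := hkill 1
    rwa [mul_one] at this
  have hdis : span R ({z} : Set R) ⊓ K = ⊥ := by
    rw [Submodule.eq_bot_iff]
    rintro x ⟨hx1, hx2⟩
    rw [SetLike.mem_coe] at hx1 hx2
    obtain ⟨s, rfl⟩ := mem_span_elt.mp hx1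
    calc s * z = (s * z) * g := hKg _ hx2
    _ = s * (z * g) := by rw [mul_assoc]
    _ = 0 := by rw [hzg, mul_zero]
  set J := span R ({z} : Set R) ⊔ K with hJ
  obtain ⟨K', e', d', he'K', hK'e', he'e', hd'J, hann, hgen, he'd'⟩ := alignment hVSS J
  -- z kills d'
  have hzd' : ∀ r : R, z * r * d' = 0 := by
    intro r
    rw [hJ, Submodule.mem_sup] at hd'J
    obtain ⟨y1, hy1, y2, hy2, hy⟩ := hd'J
    obtain ⟨a, rfl⟩ := mem_span_elt.mp hy1
    have h1 : z * r * (a * z) = 0 := by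
      calc z * r * (a * z) = z * (r * a) * z := by simp only [mul_assoc]
      _ = 0 := hzRz (r * a)
    have h2 : z * r * y2 = 0 := by
      calc z * r * y2 = z * r * (y2 * g) := by rw [← hKg y2 hy2]
      _ = z * (r * y2) * g := by simp only [mul_assoc]
      _ = 0 := hkill (r * y2)
    calc z * r * d' = z * r * (a * z + y2) := by rw [hy]
    _ = z * r * (a * z) + z * r * y2 := by rw [mul_add]
    _ = 0 := by rw [h1, h2, add_zero]
  have hkill' : ∀ r : R, z * r * e' = 0 := by
    intro r
    have h0 : (z * r * e') * d' = 0 := by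
      calc (z * r * e') * d' = (z * r) * (e' * d') := by rw [mul_assoc]
      _ = z * r * d' := by rw [he'd']
      _ = 0 := hzd' r
    have h1 : (z * r * e') * e' = 0 := (hann _).mp h0
    calc z * r * e' = z * r * e' * e' := by
          conv_lhs => rw [← he'e']
          simp only [mul_assoc]
    _ = 0 := h1
  -- the enlarged family inside J
  obtain ⟨V, hVne, hVle, hVI⟩ := hind
  set W : Fin (n + 1) → Submodule R R := Fin.cons (span R ({z} : Set R)) V with hW
  have hWne : ∀ i, W i ≠ ⊥ := by
    intro i
    rcases Fin.eq_zero_or_eq_succ i with h | ⟨i', h⟩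
    · subst h; rw [hW, Fin.cons_zero]; exact span_ne_bot_of hz0
    · subst h; rw [hW, Fin.cons_succ]; exact hVne i'
  have hWle : ∀ i, W i ≤ J := by
    intro i
    rcases Fin.eq_zero_or_eq_succ i with h | ⟨i', h⟩
    · subst h; rw [hW, Fin.cons_zero]; exact le_sup_left
    · subst h; rw [hW, Fin.cons_succ]; exact le_trans (hVle i') le_sup_right
  have hWI : Indep W := indep_cons hVI hVle hdis
  -- transfer through right multiplication by d'
  set ρ := LinearMap.toSpanSingleton R R d' with hρ
  set V'' : Fin (n + 1) → Submodule R R := fun i => comap ρ (W i) ⊓ K' with hV''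
  have hV''ne : ∀ i, V'' i ≠ ⊥ := by
    intro i
    obtain ⟨y, hy, hy0⟩ := (Submodule.ne_bot_iff _).mp (hWne i)
    obtain ⟨c, hcK', hc⟩ := hgen y (hWle i hy)
    rw [Submodule.ne_bot_iff]
    refine ⟨c, ⟨?_, hcK'⟩, ?_⟩
    · rw [SetLike.mem_coe, mem_comap, hρ, LinearMap.toSpanSingleton_apply, smul_eq_mul, ← hc]
      exact hy
    · rintro rfl
      rw [zero_mul] at hc
      exact hy0 hc
  have hV''I : Indep V'' := by
    intro j
    rw [Submodule.eq_bot_iff]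
    rintro x ⟨hx1, hx2⟩
    rw [SetLike.mem_coe] at hx1 hx2
    obtain ⟨hxW, hxK'⟩ := hx1
    rw [SetLike.mem_coe, mem_comap, hρ, LinearMap.toSpanSingleton_apply, smul_eq_mul] at hxW
    rw [SetLike.mem_coe] at hxK'
    have hmap : x * d' ∈ (Finset.univ.erase j).sup W := by
      have h1 : ρ x ∈ map ρ ((Finset.univ.erase j).sup V'') := mem_map_of_mem hx2
      have h2 : map ρ ((Finset.univ.erase j).sup V'') ≤ (Finset.univ.erase j).sup W := by
        refine map_finset_sup_le _ _ _ _ fun i _ => ?_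
        rintro y ⟨u, hu, rfl⟩
        have : u ∈ comap ρ (W i) := hu.1
        rwa [mem_comap] at this
      have := h2 h1
      rwa [hρ, LinearMap.toSpanSingleton_apply, smul_eq_mul] at this
    have hbot : x * d' ∈ W j ⊓ (Finset.univ.erase j).sup W := ⟨hxW, hmap⟩
    rw [hWI j, mem_bot] at hbot
    have hxe' : x * e' = 0 := (hann x).mp hbot
    calc x = x * e' := hK'e' x hxK'
    _ = 0 := hxe'
  exact ⟨K', e', he'K', hK'e', hkill', V'', hV''ne, fun i => inf_le_right, hV''I⟩

end Recursion

section Endgame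

lemma semiprime_of_vss
    (hVSS : ∀ N : Submodule R R, ∃ K : Submodule R R,
      (∃ K' : Submodule R R, IsCompl K K') ∧ Nonempty (N ≃ₗ[R] K)) :
    ∀ z : R, (∀ r : R, z * r * z = 0) → z = 0 := by
  intro z hz
  by_contra hz0
  have hpir := pir_of_vss hVSS
  have hN := noetherian_of_pir hpir
  obtain ⟨m, hbound⟩ := indep_bound hN
  -- base case of the recursion
  obtain ⟨K, e, d, heK, hKe, hee, hdN, hann, hgen, hed⟩ := alignment hVSS (span R ({z} : Set R))
  have hzd : ∀ r : R, z * r * d = 0 := by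
    intro r
    obtain ⟨u, rfl⟩ := mem_span_elt.mp hdN
    calc z * r * (u * z) = z * (r * u) * z := by simp only [mul_assoc]
    _ = 0 := hz (r * u)
  have hkill : ∀ r : R, z * r * e = 0 := by
    intro r
    have h0 : (z * r * e) * d = 0 := by
      calc (z * r * e) * d = (z * r) * (e * d) := by rw [mul_assoc]
      _ = z * r * d := by rw [hed]
      _ = 0 := hzd r
    have h1 : (z * r * e) * e = 0 := (hann _).mp h0
    calc z * r * e = z * r * e * e := by
          conv_lhs => rw [← hee]
          simp only [mul_assoc]
    _ = 0 := h1
  have hKne : K ≠ ⊥ := by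
    obtain ⟨c, hcK, hc⟩ := hgen z (mem_span_elt.mpr ⟨1, (one_mul z).symm⟩)
    rw [Submodule.ne_bot_iff]
    refine ⟨c, hcK, ?_⟩
    rintro rfl
    rw [zero_mul] at hc
    exact hz0 hc
  have hbase : HasIndep K 1 := by
    refine ⟨fun _ => K, fun _ => hKne, fun _ => le_rfl, fun j => ?_⟩
    have : (Finset.univ.erase j : Finset (Fin 1)) = ∅ := by
      rw [Finset.eq_empty_iff_forall_notMem]
      intro k hk
      exact (Finset.mem_erase.mp hk).1 (Subsingleton.elim k j)
    rw [this, Finset.sup_empty, inf_bot_eq]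
  have hiter : ∀ n : ℕ, ∃ (K' : Submodule R R) (g' : R), g' ∈ K' ∧
      (∀ m' ∈ K', m' = m' * g') ∧ (∀ r, z * r * g' = 0) ∧ HasIndep K' (n + 1) := by
    intro n
    induction n with
    | zero => exact ⟨K, e, heK, hKe, hkill, hbase⟩
    | succ n IH =>
        obtain ⟨K', g', h1, h2, h3, h4⟩ := IH
        exact recursion_step hVSS hz0 hz h1 h2 h3 h4
  obtain ⟨K', g', _, _, _, V, hVne, _, hVI⟩ := hiter (m + 1)
  have := hbound _ V hVne hVI
  omega

end Endgame


end
end VSSProof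

/-- A ring `R` is left virtually semisimple iff it is a semiprime principal left ideal
ring. -/
theorem stmt_15 (R : Type u) [Ring R] :
    IsVirtuallySemisimple R R ↔ (IsSemiprimeRing R ∧ IsPrincipalIdealRing R) := by
  constructor
  · intro h
    exact ⟨VSSProof.semiprime_iff.mpr (VSSProof.semiprime_of_vss h),
      VSSProof.pir_of_vss h⟩
  · rintro ⟨h1, h2⟩
    intro N
    exact VSSProof.vss_of_semiprime_pir (VSSProof.semiprime_iff.mp h1) h2 N
end

section
/- A ring R is left virtually semisimple if and only if R is a left hereditary principal left ideal ring. -/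
universe u v w

/-- A ring `R` is left virtually semisimple iff it is a left hereditary principal left
ideal ring (every left ideal is projective and principal). -/
theorem stmt_16 (R : Type u) [Ring R] :
    IsVirtuallySemisimple R R ↔
      ((∀ I : Ideal R, Module.Projective R I) ∧ IsPrincipalIdealRing R) := by
  constructor
  · intro hVS
    constructor
    · intro I
      obtain ⟨K, ⟨K', hc⟩, ⟨e⟩⟩ := hVS I
      have hK : Module.Projective R K := by
        refine Module.Projective.of_split (M := R) K.subtype
          (K.linearProjOfIsCompl K' hc) ?_
        ext x
        simp
        exact Submodule.linearProjOfIsCompl_apply_left hc x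
      exact Module.Projective.of_equiv e.symm
    · constructor
      intro I
      obtain ⟨K, ⟨K', hc⟩, ⟨e⟩⟩ := hVS I
      -- K is cyclic: generated by π 1
      set π := K.linearProjOfIsCompl K' hc with hπ
      have hsurj : Function.Surjective π := by
        intro k
        exact ⟨(k : R), Submodule.linearProjOfIsCompl_apply_left hc k⟩
      have htop : (⊤ : Submodule R K) = Submodule.span R {π 1} := by
        have h1 : (⊤ : Submodule R R) = Submodule.span R {(1 : R)} := by
          rw [eq_comm, Submodule.span_singleton_eq_top_iff]
          intro x; exact ⟨x, by simp⟩
        have := Submodule.map_span π {(1 : R)}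
        rw [Set.image_singleton] at this
        rw [← this, ← h1, Submodule.map_top, LinearMap.range_eq_top.mpr hsurj]
      have htopI : (⊤ : Submodule R I) = Submodule.span R {e.symm (π 1)} := by
        have := congrArg (Submodule.map (e.symm : K →ₗ[R] I)) htop
        rw [Submodule.map_top, LinearEquiv.range, Submodule.map_span,
          Set.image_singleton] at this
        simpa using this
      refine ⟨((e.symm (π 1) : I) : R), ?_⟩
      have := congrArg (Submodule.map I.subtype) htopI
      rw [Submodule.map_top, Submodule.range_subtype, Submodule.map_span,
        Set.image_singleton] at this
      exact this
  · rintro ⟨hProj, hPIR⟩ N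
    obtain ⟨a, ha⟩ := (hPIR.principal N).principal
    have haN : a ∈ N := by rw [ha]; exact Submodule.mem_span_singleton_self a
    set f : R →ₗ[R] N := LinearMap.toSpanSingleton R N ⟨a, haN⟩ with hf
    have hfsurj : Function.Surjective f := by
      rintro ⟨x, hx⟩
      rw [ha] at hx
      obtain ⟨r, hr⟩ := Submodule.mem_span_singleton.mp hx
      exact ⟨r, Subtype.ext (by simpa [hf, LinearMap.toSpanSingleton_apply] using hr)⟩
    haveI : Module.Projective R N := hProj N
    obtain ⟨s, hs⟩ := LinearMap.exists_rightInverse_of_surjective f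
      (LinearMap.range_eq_top.mpr hfsurj)
    have hfs : ∀ x, f (s x) = x := fun x => LinearMap.congr_fun hs x
    have hsinj : Function.Injective s := Function.LeftInverse.injective hfs
    set K := LinearMap.range s with hK
    set g : R →ₗ[R] K := LinearMap.codRestrict K (s ∘ₗ f)
      (fun x => LinearMap.mem_range_self s (f x)) with hg
    have hproj : ∀ x : K, g x = x := by
      rintro ⟨_, n, rfl⟩
      apply Subtype.ext
      simp [hg, hfs]
    exact ⟨K, ⟨LinearMap.ker g, LinearMap.isCompl_of_proj hproj⟩,
      ⟨LinearEquiv.ofInjective s hsinj⟩⟩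
end

section
/- Let D₁, …, D_k and D′₁, …, D′_r be left Noetherian (not necessarily commutative) domains and let n₁, …, n_k and m₁, …, m_r be positive integers such that the product rings ∏_{i=1}^{k} M_{n_i}(D_i) and ∏_{j=1}^{r} M_{m_j}(D′_j) are isomorphic as rings. Then k = r and there exists a permutation ξ of {1, …, k} such that n_i = m_{ξ(i)} for every i. -/
universe u v

open Matrix

section Aux

/-- A nonzero idempotent-orthogonal family in `Mₙ(D)` over a left Noetherian domain has at
most `n` members. -/
lemma aux_ortho_le {D : Type*} [Ring D] [IsDomain D] [IsNoetherianRing D] {p N : ℕ}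
    (E : Fin N → Matrix (Fin p) (Fin p) D)
    (hne : ∀ i, E i ≠ 0)
    (hmul : ∀ i j, E i * E j = if i = j then E i else 0) : N ≤ p := by
  classical
  have hentry : ∀ i, ∃ a b, E i a b ≠ 0 := by
    intro i
    by_contra h
    push_neg at h
    exact hne i (Matrix.ext fun a b => h a b)
  choose a b hab using hentry
  let v : Fin N → (Fin p → D) := fun i => E i (a i)
  have li : LinearIndependent D v := by
    rw [Fintype.linearIndependent_iff]
    intro g hg j
    have h1 : ∑ i, g i * (E i * E j) (a i) (b j) = 0 := by
      calc ∑ i, g i * (E i * E j) (a i) (b j)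
          = ∑ i, ∑ x, g i * (E i (a i) x * E j x (b j)) := by
            simp [Matrix.mul_apply, Finset.mul_sum]
        _ = ∑ x, (∑ i, g i * E i (a i) x) * E j x (b j) := by
            rw [Finset.sum_comm]
            refine Finset.sum_congr rfl fun x _ => ?_
            rw [Finset.sum_mul]
            exact Finset.sum_congr rfl fun i _ => (mul_assoc _ _ _).symm
        _ = ∑ x, ((∑ i, g i • v i) x) * E j x (b j) := by
            refine Finset.sum_congr rfl fun x _ => ?_
            congr 1
            simp [v, Finset.sum_apply]
        _ = 0 := by rw [hg]; simp
    have h2 : ∑ i, g i * (E i * E j) (a i) (b j) = g j * E j (a j) (b j) := by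
      rw [Finset.sum_eq_single j]
      · rw [hmul, if_pos rfl]
      · intro i _ hij
        rw [hmul, if_neg hij]
        simp
      · intro h; exact absurd (Finset.mem_univ j) h
    rw [h2] at h1
    rcases mul_eq_zero.mp h1 with h | h
    · exact h
    · exact absurd h (hab j)
  have hcard := li.fintype_card_le_finrank
  simpa [Module.finrank_fin_fun] using hcard

lemma aux_std_ortho {R : Type*} [Semiring R] {p : ℕ} (i j : Fin p) :
    Matrix.single i i (1 : R) * Matrix.single j j 1
      = if i = j then Matrix.single i i 1 else 0 := by
  rcases eq_or_ne i j with rfl | h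
  · rw [if_pos rfl, Matrix.single_mul_single_same, one_mul]
  · rw [if_neg h, Matrix.single_mul_single_of_ne (h := h)]

lemma aux_one_ne_zero {R : Type*} [NonAssocSemiring R] [Nontrivial R] {p : ℕ} (hp : 0 < p) :
    (1 : Matrix (Fin p) (Fin p) R) ≠ 0 := by
  intro h
  have := congrFun (congrFun h ⟨0, hp⟩) ⟨0, hp⟩
  rw [Matrix.one_apply_eq, Matrix.zero_apply] at this
  exact one_ne_zero this

lemma aux_std_ne_zero {R : Type*} [Semiring R] [Nontrivial R] {p : ℕ} (i : Fin p) :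
    Matrix.single i i (1 : R) ≠ 0 := by
  intro h
  have := congrFun (congrFun h i) i
  rw [Matrix.single_apply_same, Matrix.zero_apply] at this
  exact one_ne_zero this

/-- If `Mₚ(D) ≅ M_q(D')` as rings for left Noetherian domains `D`, `D'`, then `p = q`. -/
lemma aux_matrix_size_eq {D : Type u} {D' : Type v} [Ring D] [Ring D']
    [IsDomain D] [IsDomain D'] [IsNoetherianRing D] [IsNoetherianRing D'] {p q : ℕ}
    (e : Matrix (Fin p) (Fin p) D ≃+* Matrix (Fin q) (Fin q) D') : p = q := by
  have h1 : q ≤ p := by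
    apply aux_ortho_le (fun j : Fin q => e.symm (Matrix.single j j 1))
    · intro j h
      have h2 : (Matrix.single j j (1 : D')) = 0 := by
        have h3 := congrArg e h
        rw [e.apply_symm_apply, _root_.map_zero] at h3
        exact h3
      exact aux_std_ne_zero j h2
    · intro i j
      rw [← _root_.map_mul, aux_std_ortho]
      rcases eq_or_ne i j with rfl | h
      · rw [if_pos rfl, if_pos rfl]
      · rw [if_neg h, if_neg h, _root_.map_zero]
  have h2 : p ≤ q := by
    apply aux_ortho_le (fun i : Fin p => e (Matrix.single i i 1))
    · intro i h
      exact aux_std_ne_zero i (e.injective (by rw [h, _root_.map_zero]))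
    · intro i j
      rw [← _root_.map_mul, aux_std_ortho]
      rcases eq_or_ne i j with rfl | h
      · rw [if_pos rfl, if_pos rfl]
      · rw [if_neg h, if_neg h, _root_.map_zero]
  omega

/-- A central idempotent matrix over a domain is `0` or `1`. -/
lemma aux_central_idem {D : Type*} [Ring D] [IsDomain D] {p : ℕ}
    (C : Matrix (Fin p) (Fin p) D) (hc : ∀ X, C * X = X * C) (hi : C * C = C) :
    C = 0 ∨ C = 1 := by
  cases isEmpty_or_nonempty (Fin p) with
  | inl h => left; ext a b; exact (h.false a).elim
  | inr h =>
    obtain ⟨d, hd⟩ := Matrix.mem_range_scalar_of_commute_single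
      (M := C) (fun i j _ => (hc _).symm)
    have hdd : d * d = d := by
      have : Matrix.scalar (Fin p) (d * d) = Matrix.scalar (Fin p) d := by
        rw [_root_.map_mul, hd, hi]
      exact Matrix.scalar_inj.mp this
    have : d * (d - 1) = 0 := by rw [mul_sub, mul_one, hdd, sub_self]
    rcases mul_eq_zero.mp this with h0 | h0
    · left; rw [← hd, h0, _root_.map_zero]
    · right; rw [← hd, sub_eq_zero.mp h0, _root_.map_one]

lemma aux_single_one_central {ι : Type*} [DecidableEq ι] {M : ι → Type*}
    [∀ i, NonAssocSemiring (M i)] (i : ι) (z : ∀ l, M l) :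
    (Pi.single i 1 : ∀ l, M l) * z = z * Pi.single i 1 := by
  ext l
  rcases eq_or_ne l i with rfl | hl
  · simp
  · simp [Pi.single_eq_of_ne hl]

/-- In a finite product of matrix rings over domains, every central idempotent has all its
components equal to `0` or `1`. -/
lemma aux_single_central_idem {r : ℕ} {m : Fin r → ℕ} {D' : Fin r → Type*} [∀ j, Ring (D' j)]
    (hdom : ∀ j, IsDomain (D' j))
    (w : ∀ j, Matrix (Fin (m j)) (Fin (m j)) (D' j))
    (hc : ∀ z, w * z = z * w) (hi : w * w = w) (j : Fin r) :
    w j = 0 ∨ w j = 1 := by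
  classical
  haveI := hdom j
  apply aux_central_idem
  · intro X
    have h1 := congrFun (hc (Pi.single j X)) j
    simpa using h1
  · simpa using congrFun hi j

/-- A ring isomorphism between products of matrix rings over domains sends each "coordinate
identity" idempotent to some coordinate identity idempotent. -/
lemma aux_exists_single {k r : ℕ} {n : Fin k → ℕ} {m : Fin r → ℕ}
    {D : Fin k → Type u} [∀ i, Ring (D i)] {D' : Fin r → Type v} [∀ j, Ring (D' j)]
    (hD : ∀ i, IsDomain (D i)) (hD' : ∀ j, IsDomain (D' j))
    (hn : ∀ i, 0 < n i) (hm : ∀ j, 0 < m j)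
    (e : (∀ i, Matrix (Fin (n i)) (Fin (n i)) (D i)) ≃+*
      ∀ j, Matrix (Fin (m j)) (Fin (m j)) (D' j))
    (i : Fin k) : ∃ j, e (Pi.single i 1) = Pi.single j 1 := by
  classical
  set f : ∀ l, Matrix (Fin (n l)) (Fin (n l)) (D l) := Pi.single i 1 with hf
  have hfc : ∀ z, f * z = z * f := aux_single_one_central i
  have hff : f * f = f := by rw [hf, ← Pi.single_mul, one_mul]
  have hwc : ∀ z, e f * z = z * e f := by
    intro z
    calc e f * z = e f * e (e.symm z) := by rw [e.apply_symm_apply]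
      _ = e (f * e.symm z) := (_root_.map_mul e _ _).symm
      _ = e (e.symm z * f) := by rw [hfc]
      _ = e (e.symm z) * e f := _root_.map_mul e _ _
      _ = z * e f := by rw [e.apply_symm_apply]
  have hwi : e f * e f = e f := by rw [← _root_.map_mul, hff]
  have h01 := aux_single_central_idem hD' (e f) hwc hwi
  haveI := hD i
  have hf0 : f ≠ 0 := by
    intro h
    have := congrFun h i
    rw [hf, Pi.single_eq_same, Pi.zero_apply] at this
    exact aux_one_ne_zero (hn i) this
  have hw0 : e f ≠ 0 := by
    intro h
    exact hf0 (e.injective (by rw [h, _root_.map_zero]))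
  obtain ⟨j, hj⟩ : ∃ j, e f j ≠ 0 := by
    by_contra h
    push_neg at h
    exact hw0 (funext h)
  have hj1 : e f j = 1 := (h01 j).resolve_left hj
  set g : ∀ l, Matrix (Fin (m l)) (Fin (m l)) (D' l) := Pi.single j 1 with hg
  have hgc : ∀ z, g * z = z * g := aux_single_one_central j
  have hgg : g * g = g := by rw [hg, ← Pi.single_mul, one_mul]
  have huc : ∀ z, e.symm g * z = z * e.symm g := by
    intro z
    calc e.symm g * z = e.symm g * e.symm (e z) := by rw [e.symm_apply_apply]
      _ = e.symm (g * e z) := (_root_.map_mul e.symm _ _).symm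
      _ = e.symm (e z * g) := by rw [hgc]
      _ = e.symm (e z) * e.symm g := _root_.map_mul e.symm _ _
      _ = z * e.symm g := by rw [e.symm_apply_apply]
  have hui : e.symm g * e.symm g = e.symm g := by rw [← _root_.map_mul, hgg]
  have hu01 := aux_single_central_idem hD (e.symm g) huc hui
  have hfu : f * e.symm g = Pi.single i (e.symm g i) := by
    ext l
    rcases eq_or_ne l i with rfl | hl
    · simp [hf]
    · simp [hf, Pi.single_eq_of_ne hl]
  have hefu : e (f * e.symm g) = g := by
    rw [_root_.map_mul, e.apply_symm_apply]
    ext l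
    rcases eq_or_ne l j with rfl | hl
    · simp [hg, hj1]
    · simp [hg, Pi.single_eq_of_ne hl]
  rcases hu01 i with h0 | h1
  · exfalso
    rw [hfu, h0, Pi.single_zero, _root_.map_zero] at hefu
    haveI := hD' j
    have hzz := congrFun hefu j
    rw [hg, Pi.single_eq_same, Pi.zero_apply] at hzz
    exact aux_one_ne_zero (hm j) hzz.symm
  · refine ⟨j, ?_⟩
    rw [← hg, ← hefu, hfu, h1, hf]

/-- From `e (Pi.single i 1) = Pi.single j 1`, extract a ring isomorphism of the components. -/
lemma aux_component_iso {k r : ℕ} {n : Fin k → ℕ} {m : Fin r → ℕ}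
    {D : Fin k → Type u} [∀ i, Ring (D i)] {D' : Fin r → Type v} [∀ j, Ring (D' j)]
    (e : (∀ i, Matrix (Fin (n i)) (Fin (n i)) (D i)) ≃+*
      ∀ j, Matrix (Fin (m j)) (Fin (m j)) (D' j))
    (i : Fin k) (j : Fin r) (h : e (Pi.single i 1) = Pi.single j 1) :
    Nonempty (Matrix (Fin (n i)) (Fin (n i)) (D i) ≃+*
      Matrix (Fin (m j)) (Fin (m j)) (D' j)) := by
  classical
  have h' : e.symm (Pi.single j 1) = Pi.single i 1 := by rw [← h, e.symm_apply_apply]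
  have S1 : ∀ a : Matrix (Fin (n i)) (Fin (n i)) (D i),
      Pi.single j (e (Pi.single i a) j) = e (Pi.single i a) := by
    intro a
    have h2 : e (Pi.single i a) = Pi.single j 1 * e (Pi.single i a) := by
      rw [← h, ← _root_.map_mul, ← Pi.single_mul, one_mul]
    ext l
    rcases eq_or_ne l j with rfl | hl
    · rw [Pi.single_eq_same]
    · rw [Pi.single_eq_of_ne hl, h2, Pi.mul_apply, Pi.single_eq_of_ne hl, zero_mul]
  have S2 : ∀ b : Matrix (Fin (m j)) (Fin (m j)) (D' j),
      Pi.single i (e.symm (Pi.single j b) i) = e.symm (Pi.single j b) := by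
    intro b
    have h2 : e.symm (Pi.single j b) = Pi.single i 1 * e.symm (Pi.single j b) := by
      rw [← h', ← _root_.map_mul, ← Pi.single_mul, one_mul]
    ext l
    rcases eq_or_ne l i with rfl | hl
    · rw [Pi.single_eq_same]
    · rw [Pi.single_eq_of_ne hl, h2, Pi.mul_apply, Pi.single_eq_of_ne hl, zero_mul]
  refine ⟨{ toFun := fun a => e (Pi.single i a) j
            invFun := fun b => e.symm (Pi.single j b) i
            left_inv := ?_
            right_inv := ?_
            map_mul' := ?_
            map_add' := ?_ }⟩
  · intro a
    show e.symm (Pi.single j (e (Pi.single i a) j)) i = a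
    rw [S1 a, e.symm_apply_apply, Pi.single_eq_same]
  · intro b
    show e (Pi.single i (e.symm (Pi.single j b) i)) j = b
    rw [S2 b, e.apply_symm_apply, Pi.single_eq_same]
  · intro a b
    show e (Pi.single i (a * b)) j = e (Pi.single i a) j * e (Pi.single i b) j
    rw [Pi.single_mul, _root_.map_mul, Pi.mul_apply]
  · intro a b
    show e (Pi.single i (a + b)) j = e (Pi.single i a) j + e (Pi.single i b) j
    rw [Pi.single_add, _root_.map_add, Pi.add_apply]

end Aux

/-- Uniqueness of the matrix sizes in a product-of-matrix-rings decomposition over left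
Noetherian domains: if `∏ᵢ Mₙᵢ(Dᵢ) ≅ ∏ⱼ Mₘⱼ(D′ⱼ)` as rings, then the number of factors
agrees and the sizes agree up to a permutation. -/
theorem stmt_18 (k r : ℕ) (n : Fin k → ℕ) (m : Fin r → ℕ)
    (hn : ∀ i, 0 < n i) (hm : ∀ j, 0 < m j)
    (D : Fin k → Type u) [∀ i, Ring (D i)] (D' : Fin r → Type v) [∀ j, Ring (D' j)]
    (hD : ∀ i, IsDomain (D i)) (hD' : ∀ j, IsDomain (D' j))
    (hDnoeth : ∀ i, IsNoetherianRing (D i)) (hD'noeth : ∀ j, IsNoetherianRing (D' j))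
    (e : (∀ i, Matrix (Fin (n i)) (Fin (n i)) (D i)) ≃+*
      ∀ j, Matrix (Fin (m j)) (Fin (m j)) (D' j)) :
    k = r ∧ ∃ ξ : Fin k ≃ Fin r, ∀ i, n i = m (ξ i) := by
  classical
  choose ξ hξ using aux_exists_single hD hD' hn hm e
  choose ζ hζ using aux_exists_single hD' hD hm hn e.symm
  -- injectivity of indices of single's
  have hinjB : ∀ j j' : Fin r,
      (Pi.single j (1 : Matrix (Fin (m j)) (Fin (m j)) (D' j)) :
        ∀ l, Matrix (Fin (m l)) (Fin (m l)) (D' l)) = Pi.single j' 1 → j = j' := by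
    intro j j' hjj
    by_contra hne
    haveI := hD' j
    have h1 := congrFun hjj j
    rw [Pi.single_eq_same, Pi.single_eq_of_ne hne] at h1
    exact aux_one_ne_zero (hm j) h1
  have hinjA : ∀ i i' : Fin k,
      (Pi.single i (1 : Matrix (Fin (n i)) (Fin (n i)) (D i)) :
        ∀ l, Matrix (Fin (n l)) (Fin (n l)) (D l)) = Pi.single i' 1 → i = i' := by
    intro i i' hii
    by_contra hne
    haveI := hD i
    have h1 := congrFun hii i
    rw [Pi.single_eq_same, Pi.single_eq_of_ne hne] at h1
    exact aux_one_ne_zero (hn i) h1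
  have hleft : ∀ i, ζ (ξ i) = i := by
    intro i
    apply hinjA
    rw [← hζ (ξ i), ← hξ i, e.symm_apply_apply]
  have hright : ∀ j, ξ (ζ j) = j := by
    intro j
    apply hinjB
    rw [← hξ (ζ j), ← hζ j, e.apply_symm_apply]
  let ξe : Fin k ≃ Fin r := ⟨ξ, ζ, hleft, hright⟩
  constructor
  · simpa using Fintype.card_congr ξe
  · refine ⟨ξe, fun i => ?_⟩
    obtain ⟨φ⟩ := aux_component_iso e i (ξ i) (hξ i)
    haveI := hD i
    haveI := hD' (ξ i)
    haveI := hDnoeth i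
    haveI := hD'noeth (ξ i)
    exact aux_matrix_size_eq φ
end
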